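/- Let (H, α, m, η, Δ, ε, S) be a Hom-Hopf algebra with α invertible. Then the antipode S is anti-multiplicative: S(ab) = S(b)S(a) for all a, b ∈ H, and S(1_H) = 1_H. -/

import Mathlib

open TensorProduct

noncomputable section
namespace HomTwist

variable {k : Type*} [CommRing k]

section Defs
variable {H₁ H₂ A B : Type*} [AddCommGroup H₁] [Module k H₁] [AddCommGroup H₂] [Module k H₂]
  [AddCommGroup A] [Module k A] [AddCommGroup B] [Module k B]

/-- The componentwise "action" of `H₁ ⊗ H₂` on `A ⊗ B` induced by bilinear actions
`f : H₁ → A → A` and `g : H₂ → B → B`:  `(h₁ ⊗ h₂) • (a ⊗ b) = (f h₁ a) ⊗ (g h₂ b)`. -/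
def pairMap (f : H₁ →ₗ[k] A →ₗ[k] A) (g : H₂ →ₗ[k] B →ₗ[k] B) :
    (H₁ ⊗[k] H₂) →ₗ[k] (A ⊗[k] B) →ₗ[k] A ⊗[k] B :=
  TensorProduct.lift (((TensorProduct.mapBilinear (σ₁₂ := RingHom.id k) (M := A) (N := B) (M₂ := A) (N₂ := B)).comp f).compl₂ g)

end Defs

section Structures
variable {H : Type*} [AddCommGroup H] [Module k H]

/-- Componentwise product on `H ⊗ H` induced by a bilinear multiplication on `H`. -/
def mulT (mul : H →ₗ[k] H →ₗ[k] H) : (H ⊗[k] H) →ₗ[k] (H ⊗[k] H) →ₗ[k] H ⊗[k] H :=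
  pairMap mul mul

/-- Componentwise product on `H ⊗ (H ⊗ H)`. -/
def mulT3 (mul : H →ₗ[k] H →ₗ[k] H) :
    (H ⊗[k] (H ⊗[k] H)) →ₗ[k] (H ⊗[k] (H ⊗[k] H)) →ₗ[k] H ⊗[k] (H ⊗[k] H) :=
  pairMap mul (mulT mul)

/-- `(r ⊗ R) ↦ r⁽¹⁾ ⊗ (R⁽¹⁾ ⊗ r⁽²⁾R⁽²⁾)`. -/
def hexA (mul : H →ₗ[k] H →ₗ[k] H) :
    ((H ⊗[k] H) ⊗[k] (H ⊗[k] H)) →ₗ[k] H ⊗[k] (H ⊗[k] H) :=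
  (TensorProduct.assoc k H H H).toLinearMap
    ∘ₗ TensorProduct.map LinearMap.id (TensorProduct.lift mul)
    ∘ₗ (TensorProduct.tensorTensorTensorComm k H H H H).toLinearMap

/-- `(r ⊗ R) ↦ r⁽¹⁾R⁽¹⁾ ⊗ (R⁽²⁾ ⊗ r⁽²⁾)`. -/
def hexB (mul : H →ₗ[k] H →ₗ[k] H) :
    ((H ⊗[k] H) ⊗[k] (H ⊗[k] H)) →ₗ[k] H ⊗[k] (H ⊗[k] H) :=
  TensorProduct.map (TensorProduct.lift mul) (TensorProduct.comm k H H).toLinearMap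
    ∘ₗ (TensorProduct.tensorTensorTensorComm k H H H H).toLinearMap

/-- Axioms of a monoidal Hom-bialgebra (Caenepeel–Goyvaerts). -/
structure IsMonHomBialgebra (mul : H →ₗ[k] H →ₗ[k] H) (one : H) (alpha : H ≃ₗ[k] H)
    (comul : H →ₗ[k] H ⊗[k] H) (counit : H →ₗ[k] k) : Prop where
  alpha_mul : ∀ a b, alpha (mul a b) = mul (alpha a) (alpha b)
  hom_assoc : ∀ a b c, mul (alpha a) (mul b c) = mul (mul a b) (alpha c)
  alpha_one : alpha one = one
  one_mul' : ∀ a, mul one a = alpha a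
  mul_one' : ∀ a, mul a one = alpha a
  comul_alpha : ∀ c, comul (alpha c)
      = TensorProduct.map alpha.toLinearMap alpha.toLinearMap (comul c)
  hom_coassoc : ∀ c,
      TensorProduct.map alpha.symm.toLinearMap comul (comul c)
        = TensorProduct.assoc k H H H
            (TensorProduct.map comul alpha.symm.toLinearMap (comul c))
  counit_alpha : ∀ c, counit (alpha c) = counit c
  counit_id : ∀ c, TensorProduct.lid k H
      (TensorProduct.map counit LinearMap.id (comul c)) = alpha.symm c
  id_counit : ∀ c, TensorProduct.rid k H
      (TensorProduct.map LinearMap.id counit (comul c)) = alpha.symm c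
  comul_mul : ∀ a b, comul (mul a b) = mulT mul (comul a) (comul b)
  comul_one : comul one = one ⊗ₜ[k] one
  counit_mul : ∀ a b, counit (mul a b) = counit a * counit b
  counit_one : counit one = 1

/-- Axioms of a (Makhlouf–Silvestrov) Hom-bialgebra (with bijective structure map). -/
structure IsHomBialgebra (mul : H →ₗ[k] H →ₗ[k] H) (one : H) (alpha : H ≃ₗ[k] H)
    (comul : H →ₗ[k] H ⊗[k] H) (counit : H →ₗ[k] k) : Prop where
  alpha_mul : ∀ a b, alpha (mul a b) = mul (alpha a) (alpha b)
  hom_assoc : ∀ a b c, mul (alpha a) (mul b c) = mul (mul a b) (alpha c)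
  alpha_one : alpha one = one
  one_mul' : ∀ a, mul one a = alpha a
  mul_one' : ∀ a, mul a one = alpha a
  comul_alpha : ∀ c, comul (alpha c)
      = TensorProduct.map alpha.toLinearMap alpha.toLinearMap (comul c)
  hom_coassoc : ∀ c,
      TensorProduct.map alpha.toLinearMap comul (comul c)
        = TensorProduct.assoc k H H H
            (TensorProduct.map comul alpha.toLinearMap (comul c))
  counit_alpha : ∀ c, counit (alpha c) = counit c
  counit_id : ∀ c, TensorProduct.lid k H
      (TensorProduct.map counit LinearMap.id (comul c)) = alpha c
  id_counit : ∀ c, TensorProduct.rid k H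
      (TensorProduct.map LinearMap.id counit (comul c)) = alpha c
  comul_mul : ∀ a b, comul (mul a b) = mulT mul (comul a) (comul b)
  comul_one : comul one = one ⊗ₜ[k] one
  counit_mul : ∀ a b, counit (mul a b) = counit a * counit b
  counit_one : counit one = 1

/-- Axioms of an ordinary (possibly noncommutative) bialgebra, given by raw data. -/
structure IsBialgebra (mul : H →ₗ[k] H →ₗ[k] H) (one : H)
    (comul : H →ₗ[k] H ⊗[k] H) (counit : H →ₗ[k] k) : Prop where
  assoc : ∀ a b c, mul (mul a b) c = mul a (mul b c)
  one_mul' : ∀ a, mul one a = a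
  mul_one' : ∀ a, mul a one = a
  coassoc : ∀ c, TensorProduct.map LinearMap.id comul (comul c)
      = TensorProduct.assoc k H H H (TensorProduct.map comul LinearMap.id (comul c))
  counit_id : ∀ c, TensorProduct.lid k H
      (TensorProduct.map counit LinearMap.id (comul c)) = c
  id_counit : ∀ c, TensorProduct.rid k H
      (TensorProduct.map LinearMap.id counit (comul c)) = c
  comul_mul : ∀ a b, comul (mul a b) = mulT mul (comul a) (comul b)
  comul_one : comul one = one ⊗ₜ[k] one
  counit_mul : ∀ a b, counit (mul a b) = counit a * counit b
  counit_one : counit one = 1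

/-- A Drinfeld twist `σ` (with inverse `ϱ`) for a monoidal Hom-bialgebra. -/
structure IsTwist (mul : H →ₗ[k] H →ₗ[k] H) (one : H) (alpha : H ≃ₗ[k] H)
    (comul : H →ₗ[k] H ⊗[k] H) (counit : H →ₗ[k] k) (σ ϱ : H ⊗[k] H) : Prop where
  mul_inv : mulT mul σ ϱ = one ⊗ₜ[k] one
  inv_mul : mulT mul ϱ σ = one ⊗ₜ[k] one
  T1 : TensorProduct.map alpha.toLinearMap alpha.toLinearMap σ = σ
  T2l : TensorProduct.lid k H (TensorProduct.map counit LinearMap.id σ) = one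
  T2r : TensorProduct.rid k H (TensorProduct.map LinearMap.id counit σ) = one
  T3 : TensorProduct.map LinearMap.id (mulT mul σ)
        (TensorProduct.map LinearMap.id comul σ)
      = TensorProduct.assoc k H H H
          (TensorProduct.map (mulT mul σ) LinearMap.id
            (TensorProduct.map comul LinearMap.id σ))

/-- The `R`-matrix axioms (Q1)–(Q4) for a monoidal Hom-bialgebra. -/
structure IsRMatrix (mul : H →ₗ[k] H →ₗ[k] H) (alpha : H ≃ₗ[k] H)
    (comul : H →ₗ[k] H ⊗[k] H) (R : H ⊗[k] H) : Prop where
  Q1 : TensorProduct.map alpha.toLinearMap alpha.toLinearMap R = R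
  Q2 : ∀ h, mulT mul R (comul h)
      = mulT mul (TensorProduct.comm k H H (comul h)) R
  Q3 : TensorProduct.assoc k H H H (TensorProduct.map comul LinearMap.id R)
      = hexA mul (R ⊗ₜ[k] R)
  Q4 : TensorProduct.map LinearMap.id comul R = hexB mul (R ⊗ₜ[k] R)

/-- Axioms of a monoidal Hom-algebra. -/
structure IsMonHomAlgebra {A : Type*} [AddCommGroup A] [Module k A]
    (mul : A →ₗ[k] A →ₗ[k] A) (one : A) (alpha : A ≃ₗ[k] A) : Prop where
  alpha_mul : ∀ a b, alpha (mul a b) = mul (alpha a) (alpha b)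
  hom_assoc : ∀ a b c, mul (alpha a) (mul b c) = mul (mul a b) (alpha c)
  alpha_one : alpha one = one
  one_mul' : ∀ a, mul one a = alpha a
  mul_one' : ∀ a, mul a one = alpha a

/-- Axioms of a monoidal Hom-coalgebra. -/
structure IsMonHomCoalgebra {C : Type*} [AddCommGroup C] [Module k C]
    (comul : C →ₗ[k] C ⊗[k] C) (counit : C →ₗ[k] k) (alpha : C ≃ₗ[k] C) : Prop where
  comul_alpha : ∀ c, comul (alpha c)
      = TensorProduct.map alpha.toLinearMap alpha.toLinearMap (comul c)
  hom_coassoc : ∀ c,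
      TensorProduct.map alpha.symm.toLinearMap comul (comul c)
        = TensorProduct.assoc k C C C
            (TensorProduct.map comul alpha.symm.toLinearMap (comul c))
  counit_alpha : ∀ c, counit (alpha c) = counit c
  counit_id : ∀ c, TensorProduct.lid k C
      (TensorProduct.map counit LinearMap.id (comul c)) = alpha.symm c
  id_counit : ∀ c, TensorProduct.rid k C
      (TensorProduct.map LinearMap.id counit (comul c)) = alpha.symm c

/-- Axioms of a left `H`-Hom-module. -/
structure IsHomModule {M : Type*} [AddCommGroup M] [Module k M]
    (mul : H →ₗ[k] H →ₗ[k] H) (one : H) (alpha : H ≃ₗ[k] H)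
    (alM : M ≃ₗ[k] M) (act : H →ₗ[k] M →ₗ[k] M) : Prop where
  compat : ∀ h m, alM (act h m) = act (alpha h) (alM m)
  hom_smul : ∀ h h' m, act (alpha h) (act h' m) = act (mul h h') (alM m)
  one_smul' : ∀ m, act one m = alM m

/-- The twisted coproduct `Δᵠ(x) = (σ Δ(x)) ϱ`. -/
def twistComul (mul : H →ₗ[k] H →ₗ[k] H) (comul : H →ₗ[k] H ⊗[k] H)
    (σ ϱ : H ⊗[k] H) : H →ₗ[k] H ⊗[k] H :=
  ((mulT mul).flip ϱ) ∘ₗ (mulT mul σ) ∘ₗ comul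

end Structures
end HomTwist
end

namespace HomTwist
open TensorProduct


noncomputable section AntipodeDev
variable {k H : Type*} [CommRing k] [AddCommGroup H] [Module k H]

open TensorProduct LinearMap

lemma pairMap_tmul_tmul (f g : H →ₗ[k] H →ₗ[k] H) (h₁ h₂ a b : H) :
    pairMap f g (h₁ ⊗ₜ[k] h₂) (a ⊗ₜ[k] b) = f h₁ a ⊗ₜ[k] g h₂ b := by
  simp [pairMap]

lemma mulT_tmul_tmul (m : H →ₗ[k] H →ₗ[k] H) (a b c d : H) :
    mulT m (a ⊗ₜ[k] b) (c ⊗ₜ[k] d) = m a c ⊗ₜ[k] m b d := by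
  simp [mulT, pairMap]

/-- naturality of the associator -/
lemma assoc_nat {A B C A' B' C' : Type*} [AddCommGroup A] [Module k A]
    [AddCommGroup B] [Module k B] [AddCommGroup C] [Module k C]
    [AddCommGroup A'] [Module k A'] [AddCommGroup B'] [Module k B'] [AddCommGroup C'] [Module k C']
    (f : A →ₗ[k] A') (g : B →ₗ[k] B') (h : C →ₗ[k] C') (t : (A ⊗[k] B) ⊗[k] C) :
    TensorProduct.assoc k A' B' C' (TensorProduct.map (TensorProduct.map f g) h t)
      = TensorProduct.map f (TensorProduct.map g h) (TensorProduct.assoc k A B C t) := by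
  have : (TensorProduct.assoc k A' B' C').toLinearMap ∘ₗ
      TensorProduct.map (TensorProduct.map f g) h
      = TensorProduct.map f (TensorProduct.map g h) ∘ₗ (TensorProduct.assoc k A B C).toLinearMap := by
    apply TensorProduct.ext_threefold
    intro x y z
    simp
  exact LinearMap.congr_fun this t

lemma map_map {A B C A' B' C' : Type*} [AddCommGroup A] [Module k A]
    [AddCommGroup B] [Module k B] [AddCommGroup C] [Module k C]
    [AddCommGroup A'] [Module k A'] [AddCommGroup B'] [Module k B'] [AddCommGroup C'] [Module k C']
    (f : B →ₗ[k] C) (g : B' →ₗ[k] C') (f' : A →ₗ[k] B) (g' : A' →ₗ[k] B') (x : A ⊗[k] A') :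
    TensorProduct.map f g (TensorProduct.map f' g' x)
      = TensorProduct.map (f ∘ₗ f') (g ∘ₗ g') x := by
  rw [TensorProduct.map_comp]; rfl

/-- the big shuffle map used for coassociativity of `delta2` -/
def bigShuffle : (H ⊗[k] (H ⊗[k] H)) ⊗[k] (H ⊗[k] (H ⊗[k] H)) →ₗ[k]
    (H ⊗[k] H) ⊗[k] ((H ⊗[k] H) ⊗[k] (H ⊗[k] H)) :=
  TensorProduct.map LinearMap.id
      (TensorProduct.tensorTensorTensorComm k H H H H).toLinearMap ∘ₗ
    (TensorProduct.tensorTensorTensorComm k H (H ⊗[k] H) H (H ⊗[k] H)).toLinearMap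

lemma shuffle1 (a₁ b₁ : H) (u v : H ⊗[k] H) :
    (a₁ ⊗ₜ[k] b₁) ⊗ₜ[k]
        ((TensorProduct.tensorTensorTensorComm k H H H H) (u ⊗ₜ[k] v))
      = bigShuffle ((a₁ ⊗ₜ[k] u) ⊗ₜ[k] (b₁ ⊗ₜ[k] v)) := by
  induction u using TensorProduct.induction_on with
  | zero => simp [bigShuffle]
  | tmul u₁ u₂ =>
    induction v using TensorProduct.induction_on with
    | zero => simp [bigShuffle]
    | tmul v₁ v₂ => simp [bigShuffle]
    | add v₁ v₂ ih₁ ih₂ =>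
      simp only [tmul_add, add_tmul, map_add, ih₁, ih₂]
  | add u₁ u₂ ih₁ ih₂ =>
    simp only [tmul_add, add_tmul, map_add, ih₁, ih₂]

lemma shuffle2 (a₂ b₂ : H) (u v : H ⊗[k] H) :
    (TensorProduct.assoc k (H ⊗[k] H) (H ⊗[k] H) (H ⊗[k] H))
        (((TensorProduct.tensorTensorTensorComm k H H H H) (u ⊗ₜ[k] v)) ⊗ₜ[k] (a₂ ⊗ₜ[k] b₂))
      = bigShuffle ((TensorProduct.assoc k H H H (u ⊗ₜ[k] a₂)) ⊗ₜ[k]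
          (TensorProduct.assoc k H H H (v ⊗ₜ[k] b₂))) := by
  induction u using TensorProduct.induction_on with
  | zero => simp [bigShuffle]
  | tmul u₁ u₂ =>
    induction v using TensorProduct.induction_on with
    | zero => simp [bigShuffle]
    | tmul v₁ v₂ => simp [bigShuffle]
    | add v₁ v₂ ih₁ ih₂ =>
      simp only [tmul_add, add_tmul, map_add, ih₁, ih₂]
  | add u₁ u₂ ih₁ ih₂ =>
    simp only [tmul_add, add_tmul, map_add, ih₁, ih₂]

section Classical

variable (mul : H →ₗ[k] H →ₗ[k] H) (one : H)
  (comul : H →ₗ[k] H ⊗[k] H) (counit : H →ₗ[k] k)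

/-- multiplication as a map on the tensor square -/
def mu : H ⊗[k] H →ₗ[k] H := TensorProduct.lift mul

/-- comultiplication of the tensor square coalgebra -/
def delta2 : H ⊗[k] H →ₗ[k] (H ⊗[k] H) ⊗[k] (H ⊗[k] H) :=
  (TensorProduct.tensorTensorTensorComm k H H H H).toLinearMap ∘ₗ
    TensorProduct.map comul comul

/-- counit of the tensor square coalgebra -/
def eps2 : H ⊗[k] H →ₗ[k] k :=
  LinearMap.mul' k k ∘ₗ TensorProduct.map counit counit

/-- the unit map of the convolution algebra -/
def uu : k →ₗ[k] H := LinearMap.toSpanSingleton k H one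

/-- convolution product on maps `H ⊗ H → H` -/
def conv (f g : H ⊗[k] H →ₗ[k] H) : H ⊗[k] H →ₗ[k] H :=
  mu mul ∘ₗ TensorProduct.map f g ∘ₗ delta2 comul

lemma delta2_tmul (a b : H) :
    delta2 comul (a ⊗ₜ[k] b)
      = TensorProduct.tensorTensorTensorComm k H H H H (comul a ⊗ₜ[k] comul b) := by
  simp [delta2]

lemma eps2_tmul (a b : H) : eps2 counit (a ⊗ₜ[k] b) = counit a * counit b := by
  simp [eps2]

variable {mul one comul counit} (hB : IsBialgebra mul one comul counit)

include hB

lemma mu_assoc (t : (H ⊗[k] H) ⊗[k] H) :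
    mu mul (TensorProduct.map (mu mul) LinearMap.id t)
      = mu mul (TensorProduct.map LinearMap.id (mu mul) (TensorProduct.assoc k H H H t)) := by
  have : mu (k := k) mul ∘ₗ TensorProduct.map (mu mul) LinearMap.id
      = (mu mul ∘ₗ TensorProduct.map LinearMap.id (mu mul)) ∘ₗ (TensorProduct.assoc k H H H).toLinearMap := by
    apply TensorProduct.ext_threefold
    intro x y z
    simp [mu, hB.assoc]
  exact LinearMap.congr_fun this t

omit hB in
lemma mulT_eq_map_mu (x y : H ⊗[k] H) :
    mulT mul x y
      = TensorProduct.map (mu mul) (mu mul)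
          (TensorProduct.tensorTensorTensorComm k H H H H (x ⊗ₜ[k] y)) := by
  induction x using TensorProduct.induction_on with
  | zero => simp
  | tmul a b =>
    induction y using TensorProduct.induction_on with
    | zero => simp
    | tmul c d => simp [mulT_tmul_tmul, mu]
    | add y₁ y₂ ih₁ ih₂ => simp only [tmul_add, map_add, ih₁, ih₂]
  | add x₁ x₂ ih₁ ih₂ => simp only [add_tmul, map_add, LinearMap.add_apply, ih₁, ih₂]

lemma comul_mu (a b : H) :
    comul (mul a b)
      = TensorProduct.map (mu mul) (mu mul) (delta2 comul (a ⊗ₜ[k] b)) := by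
  rw [delta2_tmul, ← mulT_eq_map_mu, hB.comul_mul]

/-- the "coassociativity" of `delta2` -/
lemma delta2_coassoc (t : H ⊗[k] H) :
    TensorProduct.assoc k (H ⊗[k] H) (H ⊗[k] H) (H ⊗[k] H)
        (TensorProduct.map (delta2 comul) LinearMap.id (delta2 comul t))
      = TensorProduct.map LinearMap.id (delta2 comul) (delta2 comul t) := by
  have key1 : ∀ x y : H ⊗[k] H,
      TensorProduct.map LinearMap.id (delta2 comul)
          ((TensorProduct.tensorTensorTensorComm k H H H H) (x ⊗ₜ[k] y))
        = bigShuffle ((TensorProduct.map LinearMap.id comul x) ⊗ₜ[k]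
            (TensorProduct.map LinearMap.id comul y)) := by
    intro x y
    induction x using TensorProduct.induction_on with
    | zero => simp
    | tmul a₁ a₂ =>
      induction y using TensorProduct.induction_on with
      | zero => simp
      | tmul b₁ b₂ =>
        simp only [tensorTensorTensorComm_tmul, map_tmul, LinearMap.id_coe, id_eq,
          delta2_tmul]
        exact shuffle1 a₁ b₁ (comul a₂) (comul b₂)
      | add y₁ y₂ ih₁ ih₂ => simp only [tmul_add, map_add, ih₁, ih₂]
    | add x₁ x₂ ih₁ ih₂ => simp only [add_tmul, map_add, ih₁, ih₂]
  have key2 : ∀ x y : H ⊗[k] H,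
      TensorProduct.assoc k (H ⊗[k] H) (H ⊗[k] H) (H ⊗[k] H)
          (TensorProduct.map (delta2 comul) LinearMap.id
            ((TensorProduct.tensorTensorTensorComm k H H H H) (x ⊗ₜ[k] y)))
        = bigShuffle ((TensorProduct.assoc k H H H
              (TensorProduct.map comul LinearMap.id x)) ⊗ₜ[k]
            (TensorProduct.assoc k H H H (TensorProduct.map comul LinearMap.id y))) := by
    intro x y
    induction x using TensorProduct.induction_on with
    | zero => simp
    | tmul a₁ a₂ =>
      induction y using TensorProduct.induction_on with
      | zero => simp
      | tmul b₁ b₂ =>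
        simp only [tensorTensorTensorComm_tmul, map_tmul, LinearMap.id_coe, id_eq,
          delta2_tmul]
        exact shuffle2 a₂ b₂ (comul a₁) (comul b₁)
      | add y₁ y₂ ih₁ ih₂ => simp only [tmul_add, map_add, ih₁, ih₂]
    | add x₁ x₂ ih₁ ih₂ => simp only [add_tmul, map_add, ih₁, ih₂]
  induction t using TensorProduct.induction_on with
  | zero => simp
  | tmul a b =>
    rw [delta2_tmul, key2, key1]
    congr 1
    rw [hB.coassoc, hB.coassoc]
  | add t₁ t₂ ih₁ ih₂ => simp only [map_add, ih₁, ih₂]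

lemma conv_assoc (f g h : H ⊗[k] H →ₗ[k] H) :
    conv mul comul (conv mul comul f g) h = conv mul comul f (conv mul comul g h) := by
  have e : TensorProduct.map (conv mul comul f g) h
      = TensorProduct.map (mu mul) LinearMap.id ∘ₗ
          TensorProduct.map (TensorProduct.map f g) h ∘ₗ
          TensorProduct.map (delta2 comul) LinearMap.id := by
    rw [← TensorProduct.map_comp, ← TensorProduct.map_comp]
    simp [conv]
  have e' : TensorProduct.map f (conv mul comul g h)
      = TensorProduct.map LinearMap.id (mu mul) ∘ₗ
          TensorProduct.map f (TensorProduct.map g h) ∘ₗ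
          TensorProduct.map LinearMap.id (delta2 comul) := by
    rw [← TensorProduct.map_comp, ← TensorProduct.map_comp]
    simp [conv]
  apply LinearMap.ext; intro t
  show mu mul (TensorProduct.map (conv mul comul f g) h (delta2 comul t))
      = mu mul (TensorProduct.map f (conv mul comul g h) (delta2 comul t))
  rw [e, e']
  simp only [LinearMap.comp_apply]
  rw [mu_assoc hB, assoc_nat, delta2_coassoc hB]

lemma conv_one_left (g : H ⊗[k] H →ₗ[k] H) :
    conv mul comul (uu one ∘ₗ eps2 counit) g = g := by
  have key : ∀ x y : H ⊗[k] H,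
      mu mul (TensorProduct.map (uu one ∘ₗ eps2 counit) g
          ((TensorProduct.tensorTensorTensorComm k H H H H) (x ⊗ₜ[k] y)))
        = g ((TensorProduct.lid k H) (TensorProduct.map counit LinearMap.id x) ⊗ₜ[k]
            (TensorProduct.lid k H) (TensorProduct.map counit LinearMap.id y)) := by
    intro x y
    induction x using TensorProduct.induction_on with
    | zero => simp
    | tmul a₁ a₂ =>
      induction y using TensorProduct.induction_on with
      | zero => simp
      | tmul b₁ b₂ =>
        simp only [tensorTensorTensorComm_tmul, map_tmul, LinearMap.comp_apply,
          LinearMap.id_coe, id_eq, eps2_tmul, lid_tmul]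
        simp only [uu, LinearMap.toSpanSingleton_apply, mu, lift.tmul,
          map_smul, LinearMap.smul_apply, hB.one_mul', smul_tmul', tmul_smul,
          map_smul, mul_smul]
        simp only [smul_tmul, tmul_smul, map_smul, smul_smul]
        rw [mul_comm]
      | add y₁ y₂ ih₁ ih₂ =>
        simp only [tmul_add, map_add, ih₁, ih₂]
    | add x₁ x₂ ih₁ ih₂ =>
      simp only [add_tmul, map_add, LinearMap.add_apply, ih₁, ih₂]
  apply TensorProduct.ext'; intro a b
  show mu mul (TensorProduct.map _ g (delta2 comul (a ⊗ₜ[k] b))) = g (a ⊗ₜ[k] b)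
  rw [delta2_tmul, key, hB.counit_id, hB.counit_id]

lemma conv_one_right (f : H ⊗[k] H →ₗ[k] H) :
    conv mul comul f (uu one ∘ₗ eps2 counit) = f := by
  have key : ∀ x y : H ⊗[k] H,
      mu mul (TensorProduct.map f (uu one ∘ₗ eps2 counit)
          ((TensorProduct.tensorTensorTensorComm k H H H H) (x ⊗ₜ[k] y)))
        = f ((TensorProduct.rid k H) (TensorProduct.map LinearMap.id counit x) ⊗ₜ[k]
            (TensorProduct.rid k H) (TensorProduct.map LinearMap.id counit y)) := by
    intro x y
    induction x using TensorProduct.induction_on with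
    | zero => simp
    | tmul a₁ a₂ =>
      induction y using TensorProduct.induction_on with
      | zero => simp
      | tmul b₁ b₂ =>
        simp only [tensorTensorTensorComm_tmul, map_tmul, LinearMap.comp_apply,
          LinearMap.id_coe, id_eq, eps2_tmul, rid_tmul]
        simp only [uu, LinearMap.toSpanSingleton_apply, mu, lift.tmul,
          map_smul, LinearMap.smul_apply, hB.mul_one', smul_tmul', tmul_smul,
          map_smul, mul_smul]
        simp only [smul_tmul, tmul_smul, map_smul, smul_smul]
        rw [mul_comm]
      | add y₁ y₂ ih₁ ih₂ =>
        simp only [tmul_add, map_add, ih₁, ih₂]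
    | add x₁ x₂ ih₁ ih₂ =>
      simp only [add_tmul, map_add, LinearMap.add_apply, ih₁, ih₂]
  apply TensorProduct.ext'; intro a b
  show mu mul (TensorProduct.map f _ (delta2 comul (a ⊗ₜ[k] b))) = f (a ⊗ₜ[k] b)
  rw [delta2_tmul, key, hB.id_counit, hB.id_counit]

end Classical

/-- the auxiliary trilinear map `a₁ ⊗ a₂ ↦ (h ↦ a₁(h·S a₂))` -/
def phiMap (mul : H →ₗ[k] H →ₗ[k] H) (S : H →ₗ[k] H) : H ⊗[k] H →ₗ[k] H →ₗ[k] H :=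
  TensorProduct.lift (((LinearMap.llcomp k H H H).comp mul).compl₂ (mul.flip ∘ₗ S))

lemma phiMap_tmul (mul : H →ₗ[k] H →ₗ[k] H) (S : H →ₗ[k] H) (a₁ a₂ h : H) :
    phiMap mul S (a₁ ⊗ₜ[k] a₂) h = mul a₁ (mul h (S a₂)) := by
  simp [phiMap]

/-- antipode anti-multiplicativity for an ordinary bialgebra, raw form -/
theorem bialg_antipode_anti_mul
    {mul : H →ₗ[k] H →ₗ[k] H} {one : H}
    {comul : H →ₗ[k] H ⊗[k] H} {counit : H →ₗ[k] k} {S : H →ₗ[k] H}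
    (hB : IsBialgebra mul one comul counit)
    (hS₁ : ∀ x, TensorProduct.lift mul
        (TensorProduct.map S LinearMap.id (comul x)) = counit x • one)
    (hS₂ : ∀ x, TensorProduct.lift mul
        (TensorProduct.map LinearMap.id S (comul x)) = counit x • one) :
    (∀ a b, S (mul a b) = mul (S b) (S a)) ∧ S one = one := by
  have hone : S one = one := by
    have h := hS₂ one
    rw [hB.comul_one] at h
    simpa [hB.one_mul', hB.counit_one] using h
  refine ⟨?_, hone⟩
  have L3 : conv mul comul (S ∘ₗ mu mul) (mu mul) = uu one ∘ₗ eps2 counit := by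
    apply TensorProduct.ext'; intro a b
    show mu mul (TensorProduct.map (S ∘ₗ mu mul) (mu mul) (delta2 comul (a ⊗ₜ[k] b))) = _
    have e : TensorProduct.map (S ∘ₗ mu mul) (mu mul)
        = TensorProduct.map S LinearMap.id ∘ₗ TensorProduct.map (mu mul) (mu mul) := by
      rw [← TensorProduct.map_comp]
      simp
    rw [e]
    simp only [LinearMap.comp_apply]
    rw [← comul_mu hB]
    have := hS₁ (mul a b)
    simp only [mu]
    rw [this, hB.counit_mul]
    simp [uu, eps2]
  set G : H ⊗[k] H →ₗ[k] H :=
    mu mul ∘ₗ TensorProduct.map S S ∘ₗ (TensorProduct.comm k H H).toLinearMap with hGdef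
  have hGtmul : ∀ a b : H, G (a ⊗ₜ[k] b) = mul (S b) (S a) := by
    intro a b; simp [hGdef, mu]
  have claimA : ∀ x y : H ⊗[k] H,
      mu mul (TensorProduct.map (mu mul) G
          ((TensorProduct.tensorTensorTensorComm k H H H H) (x ⊗ₜ[k] y)))
        = phiMap mul S x (mu mul (TensorProduct.map LinearMap.id S y)) := by
    intro x y
    induction x using TensorProduct.induction_on with
    | zero => simp
    | tmul a₁ a₂ =>
      induction y using TensorProduct.induction_on with
      | zero => simp
      | tmul b₁ b₂ =>
        simp only [tensorTensorTensorComm_tmul, map_tmul, LinearMap.id_coe, id_eq, hGtmul,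
          phiMap_tmul, mu, lift.tmul]
        rw [hB.assoc, ← hB.assoc b₁ (S b₂) (S a₂)]
      | add y₁ y₂ ih₁ ih₂ => simp only [tmul_add, map_add, ih₁, ih₂]
    | add x₁ x₂ ih₁ ih₂ =>
      simp only [add_tmul, map_add, LinearMap.add_apply, ih₁, ih₂]
  have claimB : ∀ x : H ⊗[k] H,
      phiMap mul S x one = mu mul (TensorProduct.map LinearMap.id S x) := by
    intro x
    induction x using TensorProduct.induction_on with
    | zero => simp
    | tmul a₁ a₂ => simp [phiMap_tmul, mu, hB.one_mul']
    | add x₁ x₂ ih₁ ih₂ => simp only [map_add, LinearMap.add_apply, ih₁, ih₂]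
  have L4 : conv mul comul (mu mul) G = uu one ∘ₗ eps2 counit := by
    apply TensorProduct.ext'; intro a b
    show mu mul (TensorProduct.map (mu mul) G (delta2 comul (a ⊗ₜ[k] b))) = _
    rw [delta2_tmul, claimA]
    have h2 : mu mul (TensorProduct.map LinearMap.id S (comul b)) = counit b • one := hS₂ b
    have h1 : mu mul (TensorProduct.map LinearMap.id S (comul a)) = counit a • one := hS₂ a
    rw [h2, map_smul, claimB, h1]
    simp [uu, eps2, smul_smul, mul_comm]
  have hFG : (S ∘ₗ mu mul) = G := by
    calc S ∘ₗ mu mul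
        = conv mul comul (S ∘ₗ mu mul) (uu one ∘ₗ eps2 counit) :=
          (conv_one_right hB _).symm
      _ = conv mul comul (S ∘ₗ mu mul) (conv mul comul (mu mul) G) := by rw [L4]
      _ = conv mul comul (conv mul comul (S ∘ₗ mu mul) (mu mul)) G :=
          (conv_assoc hB _ _ _).symm
      _ = conv mul comul (uu one ∘ₗ eps2 counit) G := by rw [L3]
      _ = G := conv_one_left hB G
  intro a b
  have := LinearMap.congr_fun hFG (a ⊗ₜ[k] b)
  simpa [mu, hGtmul] using this

end AntipodeDev

/-- The antipode of a Hom-Hopf algebra (with invertible structure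
map `α`) is anti-multiplicative and preserves the unit. -/
theorem hom_hopf_antipode_anti_mul
    {k H : Type*} [CommRing k] [AddCommGroup H] [Module k H]
    (mul : H →ₗ[k] H →ₗ[k] H) (one : H) (alpha : H ≃ₗ[k] H)
    (comul : H →ₗ[k] H ⊗[k] H) (counit : H →ₗ[k] k) (S : H →ₗ[k] H)
    (hH : IsHomBialgebra mul one alpha comul counit)
    (hS₁ : ∀ x, TensorProduct.lift mul
        (TensorProduct.map S LinearMap.id (comul x)) = counit x • one)
    (hS₂ : ∀ x, TensorProduct.lift mul
        (TensorProduct.map LinearMap.id S (comul x)) = counit x • one)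
    (hSα : ∀ x, S (alpha x) = alpha (S x)) :
    (∀ a b, S (mul a b) = mul (S b) (S a)) ∧ S one = one := by
  set β : H →ₗ[k] H := alpha.symm.toLinearMap with hβdef
  have hβapp : ∀ x, β x = alpha.symm x := fun _ => rfl
  have hαm' : ∀ a b : H, alpha.symm (mul a b) = mul (alpha.symm a) (alpha.symm b) := by
    intro a b
    apply alpha.injective
    rw [alpha.apply_symm_apply, hH.alpha_mul, alpha.apply_symm_apply, alpha.apply_symm_apply]
  have hβid : β ∘ₗ alpha.toLinearMap = LinearMap.id := by
    apply LinearMap.ext; intro y; simp [hβapp]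
  have hΔβ : ∀ c, comul (alpha.symm c) = TensorProduct.map β β (comul c) := by
    intro c
    have h := hH.comul_alpha (alpha.symm c)
    rw [alpha.apply_symm_apply] at h
    rw [h, map_map, hβid]
    simp
  have hεβ : ∀ c, counit (alpha.symm c) = counit c := by
    intro c
    conv_rhs => rw [← alpha.apply_symm_apply c, hH.counit_alpha]
  have hSβ : ∀ x, S (alpha.symm x) = alpha.symm (S x) := by
    intro x
    apply alpha.injective
    rw [← hSα, alpha.apply_symm_apply, alpha.apply_symm_apply]
  have hβone : alpha.symm one = one := by
    apply alpha.injective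
    rw [alpha.apply_symm_apply, hH.alpha_one]
  set mul' : H →ₗ[k] H →ₗ[k] H := mul.compr₂ β with hmul'def
  set comul' : H →ₗ[k] H ⊗[k] H := TensorProduct.map β β ∘ₗ comul with hcomul'def
  have hmul'app : ∀ a b, mul' a b = alpha.symm (mul a b) := fun _ _ => rfl
  have hcomul'app : ∀ c, comul' c = TensorProduct.map β β (comul c) := fun _ => rfl
  have liftV : ∀ t : H ⊗[k] H,
      TensorProduct.lift mul (TensorProduct.map β β t)
        = alpha.symm (TensorProduct.lift mul t) := by
    have e : TensorProduct.lift mul ∘ₗ TensorProduct.map β β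
        = β ∘ₗ TensorProduct.lift mul := by
      apply TensorProduct.ext'; intro a b
      simp [hβapp, hαm']
    intro t
    exact LinearMap.congr_fun e t
  have U1 : ∀ x y : H ⊗[k] H, mulT mul' x y = TensorProduct.map β β (mulT mul x y) := by
    intro x y
    induction x using TensorProduct.induction_on with
    | zero => simp
    | tmul a b =>
      induction y using TensorProduct.induction_on with
      | zero => simp
      | tmul c d => simp [mulT_tmul_tmul, hmul'app, hβapp]
      | add y₁ y₂ ih₁ ih₂ => simp only [map_add, ih₁, ih₂]
    | add x₁ x₂ ih₁ ih₂ => simp only [map_add, LinearMap.add_apply, ih₁, ih₂]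
  have U2 : ∀ x y : H ⊗[k] H,
      mulT mul (TensorProduct.map β β x) (TensorProduct.map β β y)
        = TensorProduct.map β β (mulT mul x y) := by
    intro x y
    induction x using TensorProduct.induction_on with
    | zero => simp
    | tmul a b =>
      induction y using TensorProduct.induction_on with
      | zero => simp
      | tmul c d => simp [mulT_tmul_tmul, hβapp, hαm']
      | add y₁ y₂ ih₁ ih₂ => simp only [map_add, ih₁, ih₂]
    | add x₁ x₂ ih₁ ih₂ => simp only [map_add, LinearMap.add_apply, ih₁, ih₂]
  have lidnat : ∀ (f : H →ₗ[k] H) (x : H ⊗[k] H),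
      (TensorProduct.lid k H) (TensorProduct.map counit f x)
        = f ((TensorProduct.lid k H) (TensorProduct.map counit LinearMap.id x)) := by
    intro f x
    induction x using TensorProduct.induction_on with
    | zero => simp
    | tmul a b => simp
    | add x₁ x₂ ih₁ ih₂ => simp only [map_add, ih₁, ih₂]
  have ridnat : ∀ (f : H →ₗ[k] H) (x : H ⊗[k] H),
      (TensorProduct.rid k H) (TensorProduct.map f counit x)
        = f ((TensorProduct.rid k H) (TensorProduct.map LinearMap.id counit x)) := by
    intro f x
    induction x using TensorProduct.induction_on with
    | zero => simp
    | tmul a b => simp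
    | add x₁ x₂ ih₁ ih₂ => simp only [map_add, ih₁, ih₂]
  have hccβ : comul' ∘ₗ β = TensorProduct.map (β ∘ₗ β) (β ∘ₗ β) ∘ₗ comul := by
    apply LinearMap.ext; intro y
    simp only [LinearMap.comp_apply, hcomul'app]
    rw [hβapp, hΔβ, map_map]
  have hβfac : (LinearMap.id : H →ₗ[k] H) ∘ₗ β = (β ∘ₗ β) ∘ₗ alpha.toLinearMap := by
    apply LinearMap.ext; intro y
    simp [hβapp]
  have hB' : IsBialgebra mul' one comul' counit := by
    refine ⟨?_, ?_, ?_, ?_, ?_, ?_, ?_, ?_, ?_, ?_⟩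
    · intro a b c
      calc mul' (mul' a b) c
          = alpha.symm (mul (alpha.symm (mul a b)) (alpha.symm (alpha c))) := by
            rw [hmul'app, hmul'app, alpha.symm_apply_apply]
        _ = alpha.symm (alpha.symm (mul (mul a b) (alpha c))) := by rw [← hαm']
        _ = alpha.symm (alpha.symm (mul (alpha a) (mul b c))) := by rw [hH.hom_assoc]
        _ = alpha.symm (mul (alpha.symm (alpha a)) (alpha.symm (mul b c))) := by rw [hαm']
        _ = mul' a (mul' b c) := by
            rw [alpha.symm_apply_apply, hmul'app, hmul'app]
    · intro a
      rw [hmul'app, hH.one_mul', alpha.symm_apply_apply]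
    · intro a
      rw [hmul'app, hH.mul_one', alpha.symm_apply_apply]
    · intro c
      rw [hcomul'app c, map_map, hccβ]
      rw [show LinearMap.id ∘ₗ β = (β ∘ₗ β) ∘ₗ alpha.toLinearMap from hβfac]
      rw [← map_map]
      rw [show TensorProduct.map alpha.toLinearMap comul (comul c)
            = TensorProduct.assoc k H H H
                (TensorProduct.map comul alpha.toLinearMap (comul c)) from hH.hom_coassoc c]
      conv_rhs => rw [map_map, hccβ, hβfac, ← map_map]
      rw [assoc_nat]
    · intro c
      rw [hcomul'app, map_map]
      rw [show counit ∘ₗ β = counit from by apply LinearMap.ext; intro y; simp [hβapp, hεβ]]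
      rw [LinearMap.id_comp, lidnat, hH.counit_id, hβapp, alpha.symm_apply_apply]
    · intro c
      rw [hcomul'app, map_map]
      rw [show counit ∘ₗ β = counit from by apply LinearMap.ext; intro y; simp [hβapp, hεβ]]
      rw [LinearMap.id_comp, ridnat, hH.id_counit, hβapp, alpha.symm_apply_apply]
    · intro a b
      rw [hcomul'app, hcomul'app, hcomul'app, hmul'app, U1, U2, hΔβ, hH.comul_mul]
    · rw [hcomul'app, hH.comul_one]
      simp [hβapp, hβone]
    · intro a b
      rw [hmul'app, hεβ, hH.counit_mul]
    · exact hH.counit_one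
  have hlift' : TensorProduct.lift mul' = β ∘ₗ TensorProduct.lift mul := by
    rw [hmul'def]; exact TensorProduct.lift_compr₂ β
  have hS₁' : ∀ x, TensorProduct.lift mul'
      (TensorProduct.map S LinearMap.id (comul' x)) = counit x • one := by
    intro x
    rw [hlift']
    simp only [LinearMap.comp_apply]
    rw [hcomul'app, map_map]
    rw [show S ∘ₗ β = β ∘ₗ S from by apply LinearMap.ext; intro y; simp [hβapp, hSβ]]
    rw [LinearMap.id_comp]
    rw [show TensorProduct.map (β ∘ₗ S) β (comul x)
          = TensorProduct.map β β (TensorProduct.map S LinearMap.id (comul x)) from by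
        rw [map_map]; simp]
    rw [liftV, hS₁ x, hβapp]
    simp [hβone]
  have hS₂' : ∀ x, TensorProduct.lift mul'
      (TensorProduct.map LinearMap.id S (comul' x)) = counit x • one := by
    intro x
    rw [hlift']
    simp only [LinearMap.comp_apply]
    rw [hcomul'app, map_map]
    rw [show S ∘ₗ β = β ∘ₗ S from by apply LinearMap.ext; intro y; simp [hβapp, hSβ]]
    rw [LinearMap.id_comp]
    rw [show TensorProduct.map β (β ∘ₗ S) (comul x)
          = TensorProduct.map β β (TensorProduct.map LinearMap.id S (comul x)) from by
        rw [map_map]; simp]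
    rw [liftV, hS₂ x, hβapp]
    simp [hβone]
  obtain ⟨hanti, hone⟩ := bialg_antipode_anti_mul hB' hS₁' hS₂'
  refine ⟨?_, hone⟩
  intro a b
  have h := hanti a b
  rw [hmul'app, hmul'app, hSβ] at h
  exact alpha.symm.injective h

end HomTwist
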